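/- The function x(τ) = (1+2τ²)/(τ(1−2τ²)), (1−2τ²)/(τ(1+2τ²)), 1/τ) is a solution of the system ẋ₁ = x₁(x₁−x₂−x₃), ẋ₂ = x₂(x₂−x₁−x₃), ẋ₃ = −x₁x₂ on any domain avoiding the poles τ ∈ {0, ±1/√2, ±i/√2}. -/

import Mathlib

/-- the special rational solution `x^{[3']}` of
`gDH(1,1,0;0,0,0;1)`. -/
theorem stmt_16 (x₁ x₂ x₃ : ℂ → ℂ)
    (hx₁ : ∀ s, x₁ s = (1 + 2 * s ^ 2) / (s * (1 - 2 * s ^ 2)))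
    (hx₂ : ∀ s, x₂ s = (1 - 2 * s ^ 2) / (s * (1 + 2 * s ^ 2)))
    (hx₃ : ∀ s, x₃ s = 1 / s)
    (τ : ℂ) (hτ0 : τ ≠ 0) (h1 : 1 - 2 * τ ^ 2 ≠ 0) (h2 : 1 + 2 * τ ^ 2 ≠ 0) :
    HasDerivAt x₁ (x₁ τ * (x₁ τ - x₂ τ - x₃ τ)) τ ∧
    HasDerivAt x₂ (x₂ τ * (x₂ τ - x₁ τ - x₃ τ)) τ ∧
    HasDerivAt x₃ (-(x₁ τ * x₂ τ)) τ := by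
  have hE₁ : x₁ = fun s => (1 + 2 * s ^ 2) / (s * (1 - 2 * s ^ 2)) := funext hx₁
  have hE₂ : x₂ = fun s => (1 - 2 * s ^ 2) / (s * (1 + 2 * s ^ 2)) := funext hx₂
  have hE₃ : x₃ = fun s => 1 / s := funext hx₃
  subst hE₁ hE₂ hE₃
  have hid : HasDerivAt (fun s : ℂ => s) 1 τ := hasDerivAt_id τ
  have hsq : HasDerivAt (fun s : ℂ => s ^ 2) (2 * τ) τ := by
    simpa using hasDerivAt_pow 2 τ
  have hn₁ : HasDerivAt (fun s : ℂ => 1 + 2 * s ^ 2) (2 * (2 * τ)) τ :=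
    (hsq.const_mul 2).const_add 1
  have hn₂ : HasDerivAt (fun s : ℂ => 1 - 2 * s ^ 2) (-(2 * (2 * τ))) τ :=
    ((hsq.const_mul 2).const_add 0).neg.add_const 1 |>.congr_deriv (by ring) |>.congr_of_eventuallyEq (by filter_upwards with s; simp only [Pi.neg_apply]; ring)
  have hd₁ : HasDerivAt (fun s : ℂ => s * (1 - 2 * s ^ 2))
      (1 * (1 - 2 * τ ^ 2) + τ * -(2 * (2 * τ))) τ := hid.mul hn₂
  have hd₂ : HasDerivAt (fun s : ℂ => s * (1 + 2 * s ^ 2))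
      (1 * (1 + 2 * τ ^ 2) + τ * (2 * (2 * τ))) τ := hid.mul hn₁
  have hden₁ : τ * (1 - 2 * τ ^ 2) ≠ 0 := mul_ne_zero hτ0 h1
  have hden₂ : τ * (1 + 2 * τ ^ 2) ≠ 0 := mul_ne_zero hτ0 h2
  refine ⟨?_, ?_, ?_⟩
  · have := hn₁.fun_div hd₁ hden₁
    refine this.congr_deriv ?_
    field_simp
    ring
  · have := hn₂.fun_div hd₂ hden₂
    refine this.congr_deriv ?_
    field_simp
    ring
  · have := (hasDerivAt_const τ (1:ℂ)).fun_div hid hτ0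
    refine this.congr_deriv ?_
    rw [div_mul_div_comm]
    field_simp
    rw [div_self (mul_ne_zero (by rwa [mul_comm] at h2) (by rwa [mul_comm] at h1))]
    ring
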